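/- arXiv:1505.01128 — 2 statements merged into one kernel-verified Lean document; each statement's English description precedes it below -/
import Mathlib

section
/- For every relation S ⊆ T×T, define T∞(S) := νR.(S⁻¹ ∪ S ∪ ↓R)*. Then T∞ is idempotent: T∞(T∞(S)) = T∞(S). -/
open Relation

/-- A signature: a type of function symbols together with an arity for each symbol. -/
structure Signature where
  Sym : Type
  ar : Sym → ℕ

/-- The polynomial functor whose final coalgebra is the set of (finite and infinite)
terms over the signature `Sg` and the set `X` of variables. -/
def TermF (Sg : Signature) (X : Type) : PFunctor.{0} :=
  ⟨X ⊕ Sg.Sym, fun a => Sum.rec (fun _ => Empty) (fun f => Fin (Sg.ar f)) a⟩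

/-- The set `T` of finite and infinite terms over `Sg` and `X`, defined coinductively
(as the final coalgebra, i.e. the M-type, of `TermF Sg X`). -/
def Tm (Sg : Signature) (X : Type) : Type := PFunctor.M (TermF Sg X)

variable {Sg : Signature} {X : Type}

/-- The term consisting of a single variable. -/
def Tm.var (x : X) : Tm Sg X := PFunctor.M.mk ⟨Sum.inl x, Empty.elim⟩

/-- The term `f(t₁,…,tₙ)` with root symbol `f` and arguments `args`. -/
def Tm.node (f : Sg.Sym) (args : Fin (Sg.ar f) → Tm Sg X) : Tm Sg X :=
  PFunctor.M.mk ⟨Sum.inr f, args⟩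

/-- One step of the corecursive definition of substitution:
`Sum.inl t` means `t` still has to be substituted, `Sum.inr t` means `t` is copied. -/
def substAux (σ : X → Tm Sg X) :
    (Tm Sg X ⊕ Tm Sg X) → (TermF Sg X) (Tm Sg X ⊕ Tm Sg X) := fun s =>
  match s with
  | Sum.inl t =>
    match PFunctor.M.dest t with
    | ⟨Sum.inl x, _⟩ =>
        ⟨(PFunctor.M.dest (σ x)).1, fun b => Sum.inr ((PFunctor.M.dest (σ x)).2 b)⟩
    | ⟨Sum.inr f, k⟩ => ⟨Sum.inr f, fun b => Sum.inl (k b)⟩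
  | Sum.inr t =>
      ⟨(PFunctor.M.dest t).1, fun b => Sum.inr ((PFunctor.M.dest t).2 b)⟩

/-- Application `tσ` of a substitution `σ : X → T` to a term `t`, defined corecursively. -/
def subst (σ : X → Tm Sg X) (t : Tm Sg X) : Tm Sg X :=
  PFunctor.M.corec (substAux σ) (Sum.inl t)

/-- `Occurs x t`: the variable `x` occurs in the term `t`. -/
inductive Occurs (x : X) : Tm Sg X → Prop
  | here {t : Tm Sg X} : t = Tm.var x → Occurs x t
  | deeper {t : Tm Sg X} {f : Sg.Sym} {args : Fin (Sg.ar f) → Tm Sg X}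
      (i : Fin (Sg.ar f)) : t = Tm.node f args → Occurs x (args i) → Occurs x t

/-- A term rewriting system over `Sg` and `X`: a set of rules `ℓ → r` such that
`ℓ` is not a variable and all variables of `r` occur in `ℓ`. -/
structure TRS (Sg : Signature) (X : Type) where
  rules : Set (Tm Sg X × Tm Sg X)
  lhs_not_var : ∀ l r, (l, r) ∈ rules → ∀ x : X, l ≠ Tm.var x
  vars_lhs : ∀ l r, (l, r) ∈ rules → ∀ x : X, Occurs x r → Occurs x l

/-- Relations on terms. -/
abbrev TRel (Sg : Signature) (X : Type) := Tm Sg X → Tm Sg X → Prop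

/-- The root step relation `→ε := {(ℓσ, rσ) | ℓ → r ∈ R, σ a substitution}`. -/
def RootStep (R : TRS Sg X) : TRel Sg X := fun s t =>
  ∃ l r, (l, r) ∈ R.rules ∧ ∃ σ : X → Tm Sg X, s = subst σ l ∧ t = subst σ r

/-- `StepAt Q p s t`: a `Q`-step at position `p`, i.e. `s = C[u]`, `t = C[v]` with
`(u,v) ∈ Q` and `C` a one-hole context whose hole is at position `p`. -/
inductive StepAt (Q : TRel Sg X) : List ℕ → Tm Sg X → Tm Sg X → Prop
  | here {s t : Tm Sg X} : Q s t → StepAt Q [] s t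
  | deeper {f : Sg.Sym} {ss ts : Fin (Sg.ar f) → Tm Sg X} (i : Fin (Sg.ar f))
      {p : List ℕ} : StepAt Q p (ss i) (ts i) → (∀ j, j ≠ i → ss j = ts j) →
      StepAt Q ((i : ℕ) :: p) (Tm.node f ss) (Tm.node f ts)

/-- The one-step rewrite relation `→` of a TRS: a root step applied inside a
one-hole context. -/
def Step (R : TRS Sg X) : TRel Sg X := fun s t => ∃ p, StepAt (RootStep R) p s t

/-- The lifting `↓R` of a relation `R`:
`↓R := {(f(s₁,…,sₙ), f(t₁,…,tₙ)) | f ∈ Σ, s₁ R t₁, …, sₙ R tₙ} ∪ Id`. -/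
def liftRel (R : TRel Sg X) : TRel Sg X := fun s t =>
  s = t ∨ ∃ (f : Sg.Sym) (ss ts : Fin (Sg.ar f) → Tm Sg X),
    s = Tm.node f ss ∧ t = Tm.node f ts ∧ ∀ i, R (ss i) (ts i)

lemma liftRel_mono : Monotone (liftRel (Sg := Sg) (X := X)) := by
  intro R S h s t hst
  rcases hst with h1 | ⟨f, ss, ts, rfl, rfl, hi⟩
  · exact Or.inl h1
  · exact Or.inr ⟨f, ss, ts, rfl, rfl, fun i => h _ _ (hi i)⟩

/-- Relational composition `r ∘ s`. -/
def relComp (r s : TRel Sg X) : TRel Sg X := fun a c => ∃ b, r a b ∧ s b c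

/-- The monotone operator `S ↦ (→ε ∪ ↓R)* ∘ ↓S` (for a fixed `R`). -/
def iredInnerHom (R : TRS Sg X) (U : TRel Sg X) : TRel Sg X →o TRel Sg X where
  toFun S := relComp
    (ReflTransGen (fun s t => RootStep R s t ∨ liftRel U s t)) (liftRel S)
  monotone' := by
    intro S S' h a c hac
    rcases hac with ⟨b, h1, h2⟩
    exact ⟨b, h1, liftRel_mono h _ _ h2⟩

/-- The monotone operator `R ↦ νS.((→ε ∪ ↓R)* ∘ ↓S)`. -/
def iredHom (R : TRS Sg X) : TRel Sg X →o TRel Sg X where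
  toFun U := OrderHom.gfp (iredInnerHom R U)
  monotone' := by
    intro U V h
    apply OrderHom.gfp.monotone
    intro S a c hac
    rcases hac with ⟨b, h1, h2⟩
    refine ⟨b, ?_, h2⟩
    exact ReflTransGen.mono (fun x y hxy => hxy.imp id (fun h' => liftRel_mono h _ _ h')) _ _ h1

/-- The infinitary rewrite relation `→∞ := μR.νS.((→ε ∪ ↓R)* ∘ ↓S)`. -/
def ired (R : TRS Sg X) : TRel Sg X := OrderHom.lfp (iredHom R)

/-- The monotone operator `R' ↦ (→ε ∪ ↓R')*`. -/
def biHom (R : TRS Sg X) : TRel Sg X →o TRel Sg X where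
  toFun U := ReflTransGen (fun s t => RootStep R s t ∨ liftRel U s t)
  monotone' := by
    intro U V h a b hab
    exact ReflTransGen.mono (fun x y hxy => hxy.imp id (fun h' => liftRel_mono h _ _ h')) _ _ hab

/-- The bi-infinite rewrite relation `∞→ := νR.(→ε ∪ ↓R)*`. -/
def bired (R : TRS Sg X) : TRel Sg X := OrderHom.gfp (biHom R)

/-- The monotone operator `R' ↦ (←ε ∪ →ε ∪ ↓R')*`. -/
def ieqHom (R : TRS Sg X) : TRel Sg X →o TRel Sg X where
  toFun U := ReflTransGen (fun s t => RootStep R t s ∨ RootStep R s t ∨ liftRel U s t)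
  monotone' := by
    intro U V h a b hab
    exact ReflTransGen.mono
      (fun x y hxy => hxy.imp id (fun h' => h'.imp id (fun h'' => liftRel_mono h _ _ h''))) _ _ hab

/-- The infinitary equational reasoning relation `=∞ := νR.(←ε ∪ →ε ∪ ↓R)*`. -/
def ieq (R : TRS Sg X) : TRel Sg X := OrderHom.gfp (ieqHom R)

/-- `Agree n s t`: the terms `s` and `t` coincide up to depth `n`
(i.e. `d(s,t) ≤ 2^{-n}` for the standard metric `d`). -/
def Agree : ℕ → Tm Sg X → Tm Sg X → Prop
  | 0, _, _ => True
  | n + 1, s, t =>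
      (∃ x : X, s = Tm.var x ∧ t = Tm.var x) ∨
      ∃ (f : Sg.Sym) (ss ts : Fin (Sg.ar f) → Tm Sg X),
        s = Tm.node f ss ∧ t = Tm.node f ts ∧ ∀ i, Agree n (ss i) (ts i)

/-- `ConvTo t p l tl`: as `β` approaches the ordinal `l` from below,
`d(t β, tl)` tends to `0` and the depth `|p β|` tends to infinity. -/
def ConvTo (t : Ordinal.{0} → Tm Sg X) (p : Ordinal.{0} → List ℕ) (l : Ordinal.{0})
    (tl : Tm Sg X) : Prop :=
  (∀ n : ℕ, ∃ β₀ < l, ∀ β, β₀ ≤ β → β < l → Agree n (t β) tl) ∧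
  (∀ n : ℕ, ∃ β₀ < l, ∀ β, β₀ ≤ β → β < l → n ≤ (p β).length)

/-- A transfinite sequence of `Q`-steps `(t_β →_{p_β} t_{β+1})_{β<α}` of ordinal
length `α`, weakly continuous and with depths tending to infinity at every limit
ordinal `λ < α`. -/
structure TransSeq (Q : TRel Sg X) (α : Ordinal.{0}) where
  t : Ordinal.{0} → Tm Sg X
  pos : Ordinal.{0} → List ℕ
  step : ∀ β < α, StepAt Q (pos β) (t β) (t (β + 1))
  conv : ∀ l < α, Order.IsSuccLimit l → ConvTo t pos l (t l)

/-- A transfinite rewrite sequence is strongly convergent if its length is a successor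
ordinal (or zero), or there exists a final term to which it converges (with depths
tending to infinity) at the limit. -/
def TransSeq.StronglyConvergent {Q : TRel Sg X} {α : Ordinal.{0}} (s : TransSeq Q α) : Prop :=
  Order.IsSuccLimit α → ∃ tl, ConvTo s.t s.pos α tl

/-- `SCRed Q s t`: there is a strongly convergent transfinite sequence of `Q`-steps
from `s` to `t`. -/
def SCRed (Q : TRel Sg X) : TRel Sg X := fun a b =>
  ∃ (α : Ordinal.{0}) (s : TransSeq Q α), s.t 0 = a ∧ s.t α = b ∧
    (Order.IsSuccLimit α → ConvTo s.t s.pos α b)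

/-- The standard, ordinal-based infinitary rewrite relation `→∞_ord`:
strongly convergent transfinite rewrite sequences. -/
def iredOrd (R : TRS Sg X) : TRel Sg X := SCRed (RootStep R)

-- auxiliary facts about the term constructors
lemma node_ne_var (f : Sg.Sym) (args : Fin (Sg.ar f) → Tm Sg X) (x : X) :
    Tm.node f args ≠ Tm.var x := by
  intro h
  have h1 := congrArg (fun u => (PFunctor.M.dest u).1) h
  simp only [Tm.node, Tm.var, PFunctor.M.dest_mk] at h1
  exact Sum.inr_ne_inl h1

lemma node_inj_sym {f g : Sg.Sym} {ss : Fin (Sg.ar f) → Tm Sg X}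
    {ts : Fin (Sg.ar g) → Tm Sg X} (h : Tm.node f ss = Tm.node g ts) : f = g := by
  have h1 := congrArg (fun u => (PFunctor.M.dest u).1) h
  simp only [Tm.node, PFunctor.M.dest_mk] at h1
  exact Sum.inr.inj h1

lemma node_inj_args {f : Sg.Sym} {ss ts : Fin (Sg.ar f) → Tm Sg X}
    (h : Tm.node f ss = Tm.node f ts) : ss = ts := by
  have h' : (PFunctor.M.mk ⟨Sum.inr f, ss⟩ : Tm Sg X) = PFunctor.M.mk ⟨Sum.inr f, ts⟩ := h
  have h1 := PFunctor.M.mk_inj h'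
  injection h1 with h2 h3

lemma var_inj {x y : X} (h : (Tm.var x : Tm Sg X) = Tm.var y) : x = y := by
  have h1 := congrArg (fun u => (PFunctor.M.dest u).1) h
  simp only [Tm.var, PFunctor.M.dest_mk] at h1
  exact Sum.inl.inj h1

lemma occurs_var_iff {x y : X} : Occurs x (Tm.var y : Tm Sg X) ↔ x = y := by
  constructor
  · intro h
    cases h with
    | here h => exact (var_inj h.symm)
    | deeper i h _ => exact absurd h.symm (node_ne_var _ _ _)
  · rintro rfl
    exact Occurs.here rfl

lemma occurs_node_iff {x : X} {f : Sg.Sym} {args : Fin (Sg.ar f) → Tm Sg X} :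
    Occurs x (Tm.node f args) ↔ ∃ i, Occurs x (args i) := by
  constructor
  · intro h
    cases h with
    | here h => exact absurd h (node_ne_var _ _ _)
    | deeper i h hocc =>
      obtain rfl := node_inj_sym h
      obtain rfl := node_inj_args h
      exact ⟨i, hocc⟩
  · rintro ⟨i, h⟩
    exact Occurs.deeper i rfl h

/-- The monotone operator `U ↦ (S⁻¹ ∪ S ∪ ↓U)*` (for a fixed relation `S`). -/
def TinfHom (S : TRel Sg X) : TRel Sg X →o TRel Sg X where
  toFun U := Relation.ReflTransGen (fun a b => S b a ∨ S a b ∨ liftRel U a b)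
  monotone' := by
    intro U V h a b hab
    exact ReflTransGen.mono
      (fun x y hxy => hxy.imp id (fun h' => h'.imp id (fun h'' => liftRel_mono h _ _ h''))) _ _ hab

/-- The closure operator `T∞(S) := νR.(S⁻¹ ∪ S ∪ ↓R)*`. -/
def Tinf (S : TRel Sg X) : TRel Sg X := OrderHom.gfp (TinfHom S)

lemma liftRel_flip {R : TRel Sg X} {a b : Tm Sg X} (h : liftRel R b a) :
    liftRel (flip R) a b := by
  rcases h with rfl | ⟨f, ss, ts, h1, h2, hi⟩
  · exact Or.inl rfl
  · exact Or.inr ⟨f, ts, ss, h2, h1, fun i => hi i⟩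

lemma Tinf_unfold (S : TRel Sg X) :
    Tinf S = Relation.ReflTransGen (fun a b => S b a ∨ S a b ∨ liftRel (Tinf S) a b) :=
  (OrderHom.map_gfp (TinfHom S)).symm

lemma le_Tinf_self (S : TRel Sg X) : S ≤ Tinf S := by
  apply OrderHom.le_gfp
  intro a b hab
  exact Relation.ReflTransGen.single (Or.inr (Or.inl hab))

lemma Tinf_flip_le (S : TRel Sg X) : flip (Tinf S) ≤ Tinf S := by
  apply OrderHom.le_gfp
  intro a b hab
  have hab' : Relation.ReflTransGen
      (fun a b => S b a ∨ S a b ∨ liftRel (Tinf S) a b) b a := by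
    rw [← Tinf_unfold]; exact hab
  have hsw := (Relation.reflTransGen_swap).mpr hab'
  refine Relation.ReflTransGen.mono ?_ _ _ hsw
  intro x y hxy
  rcases hxy with h1 | h2 | h3
  · exact Or.inr (Or.inl h1)
  · exact Or.inl h2
  · exact Or.inr (Or.inr (liftRel_flip h3))

/-- The operator `T∞` is idempotent: `T∞(T∞(S)) = T∞(S)` for every
relation `S` on terms. -/
theorem Tinf_idem (Sg : Signature) (X : Type) [Infinite X] (S : TRel Sg X) :
    Tinf (Tinf S) = Tinf S := by
  apply le_antisymm
  · -- hard direction: Tinf (Tinf S) ≤ Tinf S, by coinduction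
    apply OrderHom.le_gfp
    intro a b hab
    have hab' : Relation.ReflTransGen
        (fun a b => Tinf S b a ∨ Tinf S a b ∨ liftRel (Tinf (Tinf S)) a b) a b := by
      rw [← Tinf_unfold]; exact hab
    have key : ∀ x y : Tm Sg X, Tinf S x y →
        Relation.ReflTransGen
          (fun a b => S b a ∨ S a b ∨ liftRel (Tinf (Tinf S)) a b) x y := by
      intro x y hxy
      rw [Tinf_unfold] at hxy
      refine Relation.ReflTransGen.mono ?_ _ _ hxy
      intro u v huv
      refine huv.imp id (fun h' => h'.imp id (fun h'' => ?_))
      exact liftRel_mono (le_Tinf_self (Tinf S)) _ _ h''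
    clear hab
    induction hab' with
    | refl => exact Relation.ReflTransGen.refl
    | tail _ hstep ih =>
      refine ih.trans ?_
      rcases hstep with h1 | h2 | h3
      · exact key _ _ (Tinf_flip_le S _ _ h1)
      · exact key _ _ h2
      · exact Relation.ReflTransGen.single (Or.inr (Or.inr h3))
  · -- easy direction: Tinf S ≤ Tinf (Tinf S)
    exact le_Tinf_self (Tinf S)
end

section
/- For every TRS R over a signature Σ, Kahrs's relation S_E(→) := ⋃_{n∈ℕ} (S∘E)ⁿ(→) is included in the infinitary equational reasoning relation: S_E(→) ⊆ =∞. -/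
open Relation

variable {Sg : Signature} {X : Type}

/-- The `n`-fold iterate `(S∘E)ⁿ(→)` of the operator `Q ↦ S(E(Q))` applied to the
one-step rewrite relation `→`, where `E` is equivalence closure and `S(Q)` is the
strongly convergent transfinite rewrite relation generated by `Q`-steps. -/
def SEiter (R : TRS Sg X) : ℕ → TRel Sg X
  | 0 => Step R
  | n + 1 => SCRed (Relation.EqvGen (SEiter R n))

/-- Kahrs's relation `S_E(→) := ⋃_{n∈ℕ} (S∘E)ⁿ(→)`. -/
def SERel (R : TRS Sg X) : TRel Sg X := fun s t => ∃ n, SEiter R n s t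

-- ===================== auxiliary development =====================

lemma tm_cases (t : Tm Sg X) :
    (∃ x : X, t = Tm.var x) ∨
      ∃ (f : Sg.Sym) (args : Fin (Sg.ar f) → Tm Sg X), t = Tm.node f args := by
  rcases h : PFunctor.M.dest t with ⟨a, k⟩
  have ht : t = PFunctor.M.mk ⟨a, k⟩ := by rw [← h]; exact (PFunctor.M.mk_dest _).symm
  cases a with
  | inl x =>
    left
    refine ⟨x, ?_⟩
    rw [ht]
    unfold Tm.var
    congr
    funext e
    exact Empty.elim e
  | inr f => exact Or.inr ⟨f, k, ht⟩

/-- The subterm of `t` at position `q`, if it exists. -/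
def subtm : List ℕ → Tm Sg X → Option (Tm Sg X)
  | [], t => some t
  | i :: p, t =>
    match PFunctor.M.dest t with
    | ⟨Sum.inl _, _⟩ => none
    | ⟨Sum.inr f, k⟩ => if h : i < Sg.ar f then subtm p (k ⟨i, h⟩) else none

@[simp] lemma subtm_nil (t : Tm Sg X) : subtm [] t = some t := rfl

@[simp] lemma subtm_cons_var (i : ℕ) (p : List ℕ) (x : X) :
    subtm (i :: p) (Tm.var x : Tm Sg X) = none := by
  simp only [subtm, Tm.var]; erw [PFunctor.M.dest_mk]

lemma subtm_cons_node (i : ℕ) (p : List ℕ) (f : Sg.Sym) (args : Fin (Sg.ar f) → Tm Sg X) :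
    subtm (i :: p) (Tm.node f args) =
      if h : i < Sg.ar f then subtm p (args ⟨i, h⟩) else none := by
  simp only [subtm, Tm.node]; erw [PFunctor.M.dest_mk]

@[simp] lemma subtm_cons_node' {f : Sg.Sym} (i : Fin (Sg.ar f)) (p : List ℕ)
    (args : Fin (Sg.ar f) → Tm Sg X) :
    subtm ((i : ℕ) :: p) (Tm.node f args) = subtm p (args i) := by
  rw [subtm_cons_node, dif_pos i.isLt, Fin.eta]

lemma subtm_append : ∀ (q q' : List ℕ) (t : Tm Sg X),
    subtm (q ++ q') t = (subtm q t).bind (subtm q') := by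
  intro q
  induction q with
  | nil => intro q' t; rfl
  | cons a q ih =>
    intro q' t
    rcases tm_cases t with ⟨x, rfl⟩ | ⟨f, args, rfl⟩
    · simp
    · rw [List.cons_append, subtm_cons_node, subtm_cons_node]
      split
      · exact ih q' _
      · rfl

lemma agree_succ (n : ℕ) (s t : Tm Sg X) :
    Agree (n + 1) s t ↔
      ((∃ x : X, s = Tm.var x ∧ t = Tm.var x) ∨
       ∃ (f : Sg.Sym) (ss ts : Fin (Sg.ar f) → Tm Sg X),
         s = Tm.node f ss ∧ t = Tm.node f ts ∧ ∀ i, Agree n (ss i) (ts i)) :=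
  Iff.rfl

lemma agree_symm : ∀ (n : ℕ) {s t : Tm Sg X}, Agree n s t → Agree n t s
  | 0, _, _, _ => trivial
  | n + 1, s, t, h => by
    rcases h with ⟨x, rfl, rfl⟩ | ⟨f, ss, ts, rfl, rfl, hargs⟩
    · exact Or.inl ⟨x, rfl, rfl⟩
    · exact Or.inr ⟨f, ts, ss, rfl, rfl, fun i => agree_symm n (hargs i)⟩

lemma agree_subtm : ∀ (q : List ℕ) (n : ℕ) {s t u : Tm Sg X},
    Agree (q.length + n) s t → subtm q s = some u →
    ∃ v, subtm q t = some v ∧ Agree n u v := by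
  intro q
  induction q with
  | nil =>
    intro n s t u h hu
    rw [subtm_nil] at hu
    obtain rfl := Option.some.inj hu
    exact ⟨t, rfl, by simpa using h⟩
  | cons a q ih =>
    intro n s t u h hu
    have e : (a :: q).length + n = (q.length + n) + 1 := by
      simp [List.length_cons]; omega
    rw [e] at h
    rcases h with ⟨x, rfl, rfl⟩ | ⟨f, ss, ts, rfl, rfl, hargs⟩
    · rw [subtm_cons_var] at hu; exact absurd hu (by simp)
    · rw [subtm_cons_node] at hu
      split at hu
      case isTrue hlt =>
        obtain ⟨v, hv, hav⟩ := ih n (hargs ⟨a, hlt⟩) hu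
        exact ⟨v, by rw [subtm_cons_node, dif_pos hlt]; exact hv, hav⟩
      case isFalse => exact absurd hu (by simp)

lemma stepAt_append {Q : TRel Sg X} :
    ∀ (q : List ℕ) {p : List ℕ} {s t : Tm Sg X}, StepAt Q (q ++ p) s t →
      ∃ u v, subtm q s = some u ∧ subtm q t = some v ∧ StepAt Q p u v := by
  intro q
  induction q with
  | nil => intro p s t h; exact ⟨s, t, rfl, rfl, h⟩
  | cons a q ih =>
    intro p s t h
    cases h with
    | deeper i hst hoth =>
      obtain ⟨u, v, hu, hv, h'⟩ := ih hst
      exact ⟨u, v, by rw [subtm_cons_node']; exact hu,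
        by rw [subtm_cons_node']; exact hv, h'⟩

lemma stepAt_off {Q : TRel Sg X} :
    ∀ {p : List ℕ} {s t : Tm Sg X}, StepAt Q p s t →
      ∀ q : List ℕ, ¬ q <+: p → ¬ p <+: q → subtm q s = subtm q t := by
  intro p s t h
  induction h with
  | here hq => intro q _ h2; exact absurd List.nil_prefix h2
  | @deeper f ss ts i p' hst hoth ih =>
    intro q h1 h2
    match q with
    | [] => exact absurd List.nil_prefix h1
    | a :: q' =>
      rw [subtm_cons_node, subtm_cons_node]
      by_cases hai : a = (i : ℕ)
      · subst hai
        have h1' : ¬ q' <+: p' := fun hc => h1 (List.cons_prefix_cons.mpr ⟨rfl, hc⟩)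
        have h2' : ¬ p' <+: q' := fun hc => h2 (List.cons_prefix_cons.mpr ⟨rfl, hc⟩)
        by_cases hlt : (i : ℕ) < Sg.ar f
        · rw [dif_pos hlt, dif_pos hlt, Fin.eta i hlt, ih q' h1' h2']
        · rw [dif_neg hlt, dif_neg hlt]
      · by_cases hlt : a < Sg.ar f
        · rw [dif_pos hlt, dif_pos hlt,
            hoth ⟨a, hlt⟩ (fun he => hai (congrArg Fin.val he))]
        · rw [dif_neg hlt, dif_neg hlt]

/-- Restriction of a transfinite sequence to a shorter length. -/
def TransSeq.restrict {Q : TRel Sg X} {α : Ordinal.{0}} (seq : TransSeq Q α)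
    (β₁ : Ordinal.{0}) (h : β₁ ≤ α) : TransSeq Q β₁ where
  t := seq.t
  pos := seq.pos
  step := fun β hβ => seq.step β (lt_of_lt_of_le hβ h)
  conv := fun l hl => seq.conv l (lt_of_lt_of_le hl h)

/-- The auxiliary relation: projections at a position `q`, from some offset `β₀` on,
of strongly convergent transfinite `EqvGen (SEiter R n)`-rewrite sequences. -/
def W0 (R : TRS Sg X) : TRel Sg X := fun u v =>
  ∃ (n : ℕ) (α : Ordinal.{0}) (seq : TransSeq (EqvGen (SEiter R n)) α),
    (Order.IsSuccLimit α → ConvTo seq.t seq.pos α (seq.t α)) ∧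
    ∃ β₀, β₀ ≤ α ∧ ∃ q : List ℕ,
      (∀ β, β₀ ≤ β → β < α → q <+: seq.pos β ∨ ¬ seq.pos β <+: q) ∧
      subtm q (seq.t β₀) = some u ∧ subtm q (seq.t α) = some v

def Wrel (R : TRS Sg X) : TRel Sg X := EqvGen (W0 R)

def Gbase (R : TRS Sg X) : TRel Sg X := fun s t =>
  RootStep R t s ∨ RootStep R s t ∨ liftRel (Wrel R) s t

def Grel (R : TRS Sg X) : TRel Sg X := ReflTransGen (Gbase R)

/-- A single step as a transfinite sequence of length 1. -/
noncomputable def singleSeq {Q : TRel Sg X} {p : List ℕ} {u v : Tm Sg X} (h : StepAt Q p u v) :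
    TransSeq Q 1 where
  t := fun β => if β = 0 then u else v
  pos := fun _ => p
  step := by
    intro β hβ
    obtain rfl := Ordinal.lt_one_iff_zero.mp hβ
    simpa using h
  conv := by
    intro l hl hlim
    obtain rfl := Ordinal.lt_one_iff_zero.mp hl
    exact absurd hlim Ordinal.not_isSuccLimit_zero

lemma not_one_isLimit : ¬ Order.IsSuccLimit (1 : Ordinal.{0}) := by
  intro h
  have := Order.not_isSuccLimit_succ (0 : Ordinal.{0})
  rw [Ordinal.succ_zero] at this
  exact this h

lemma w0_of_stepAt (R : TRS Sg X) (n : ℕ) {p : List ℕ} {u v : Tm Sg X}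
    (h : StepAt (EqvGen (SEiter R n)) p u v) : W0 R u v := by
  refine ⟨n, 1, singleSeq h, fun hl => absurd hl not_one_isLimit, 0, zero_le_one, [],
    fun β _ _ => Or.inl List.nil_prefix, ?_, ?_⟩
  · simp [singleSeq]
  · simp [singleSeq]

lemma liftRel_symm {W : TRel Sg X} (hW : ∀ a b, W a b → W b a) {s t : Tm Sg X}
    (h : liftRel W s t) : liftRel W t s := by
  rcases h with rfl | ⟨f, ss, ts, rfl, rfl, hargs⟩
  · exact Or.inl rfl
  · exact Or.inr ⟨f, ts, ss, rfl, rfl, fun i => hW _ _ (hargs i)⟩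

lemma gbase_symm (R : TRS Sg X) : ∀ s t : Tm Sg X, Gbase R s t → Gbase R t s := by
  intro s t h
  rcases h with h | h | h
  · exact Or.inr (Or.inl h)
  · exact Or.inl h
  · exact Or.inr (Or.inr (liftRel_symm (fun a b hab => EqvGen.symm a b hab) h))

lemma grel_symm {R : TRS Sg X} {s t : Tm Sg X} (h : Grel R s t) : Grel R t s :=
  by haveI : Std.Symm (Gbase R) := ⟨fun a b hab => gbase_symm R a b hab⟩; exact (ReflTransGen.stdSymm (r := Gbase R)).symm _ _ h

lemma grel_of_eqvGen {R : TRS Sg X} {r : TRel Sg X} (hr : ∀ s t, r s t → Grel R s t) :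
    ∀ {s t : Tm Sg X}, EqvGen r s t → Grel R s t := by
  intro s t h
  induction h with
  | rel a b hab => exact hr a b hab
  | refl a => exact ReflTransGen.refl
  | symm a b _ ih => exact grel_symm ih
  | trans a b c _ _ ih1 ih2 => exact ih1.trans ih2

lemma step_grel (R : TRS Sg X) : ∀ {s t : Tm Sg X}, Step R s t → Grel R s t := by
  rintro s t ⟨p, h⟩
  induction h with
  | here hr => exact ReflTransGen.single (Or.inr (Or.inl hr))
  | @deeper f ss ts i p' hst hoth ih =>
    refine ReflTransGen.single (Or.inr (Or.inr (Or.inr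
      ⟨f, ss, ts, rfl, rfl, fun j => ?_⟩)))
    by_cases hj : j = i
    · subst hj
      refine EqvGen.rel _ _ (w0_of_stepAt R 0 (StepAt.here ?_))
      exact EqvGen.rel _ _ (⟨p', hst⟩ : Step R _ _)
    · rw [hoth j hj]; exact EqvGen.refl _

lemma stepAt_grel (R : TRS Sg X) (n : ℕ) (Bn : ∀ s t : Tm Sg X, SEiter R n s t → Grel R s t) :
    ∀ {p : List ℕ} {u v : Tm Sg X}, StepAt (EqvGen (SEiter R n)) p u v → Grel R u v := by
  intro p u v h
  cases h with
  | here hq => exact grel_of_eqvGen Bn hq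
  | @deeper f ss ts i p' hst hoth =>
    refine ReflTransGen.single (Or.inr (Or.inr (Or.inr
      ⟨f, ss, ts, rfl, rfl, fun j => ?_⟩)))
    by_cases hj : j = i
    · subst hj
      exact EqvGen.rel _ _ (w0_of_stepAt R n hst)
    · rw [hoth j hj]; exact EqvGen.refl _

/-- The main lemma. -/
lemma lemA (R : TRS Sg X) : ∀ (n : ℕ) (α : Ordinal.{0})
    (seq : TransSeq (EqvGen (SEiter R n)) α),
    (Order.IsSuccLimit α → ConvTo seq.t seq.pos α (seq.t α)) →
    ∀ β₀, β₀ ≤ α → ∀ (q : List ℕ) (u v : Tm Sg X),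
    (∀ β, β₀ ≤ β → β < α → q <+: seq.pos β ∨ ¬ seq.pos β <+: q) →
    subtm q (seq.t β₀) = some u → subtm q (seq.t α) = some v →
    Grel R u v := by
  intro n
  induction n using Nat.strong_induction_on with
  | _ n IHn =>
  have Bn : ∀ s t : Tm Sg X, SEiter R n s t → Grel R s t := by
    match n with
    | 0 => exact fun s t h => step_grel R h
    | Nat.succ k =>
      intro s t h
      obtain ⟨α, seq, h0, hend, hconv⟩ := h
      exact IHn k (Nat.lt_succ_self k) α seq
        (by rw [hend]; exact hconv) 0 (zero_le : (0 : Ordinal.{0}) ≤ α) [] s t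
        (fun β _ _ => Or.inl List.nil_prefix)
        (by rw [subtm_nil, h0]) (by rw [subtm_nil, hend])
  intro α
  induction α using Ordinal.induction with
  | h α IHα =>
  intro seq hconv β₀ hβ₀ q u v hC hu hv
  rcases eq_or_lt_of_le hβ₀ with rfl | hβ₀lt
  · rw [hu] at hv
    obtain rfl := Option.some.inj hv
    exact ReflTransGen.refl
  rcases Ordinal.zero_or_succ_or_isSuccLimit α with rfl | ⟨γ, rfl⟩ | hlim
  · exact absurd hβ₀lt (not_lt_of_ge (zero_le : (0 : Ordinal.{0}) ≤ β₀))
  · -- successor case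
    have hβγ : β₀ ≤ γ := Order.lt_succ_iff.mp hβ₀lt
    have hγα : γ < Order.succ γ := Order.lt_succ γ
    have hstep := seq.step γ hγα
    rw [Ordinal.add_one_eq_succ] at hstep
    by_cases hqp : q <+: seq.pos γ
    · obtain ⟨p', hp'⟩ := hqp
      rw [← hp'] at hstep
      obtain ⟨u', v', hu', hv', hstep'⟩ := stepAt_append q hstep
      have hIH : Grel R u u' :=
        IHα γ hγα (seq.restrict γ hγα.le) (fun hl => seq.conv γ hγα hl) β₀ hβγ q u u'
          (fun β hb1 hb2 => hC β hb1 (hb2.trans hγα)) hu hu'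
      rw [hv] at hv'
      obtain rfl := Option.some.inj hv'
      exact hIH.trans (stepAt_grel R n Bn hstep')
    · have hnp : ¬ seq.pos γ <+: q := (hC γ hβγ hγα).resolve_left hqp
      have heq := stepAt_off hstep q hqp hnp
      exact IHα γ hγα (seq.restrict γ hγα.le) (fun hl => seq.conv γ hγα hl) β₀ hβγ q u v
        (fun β hb1 hb2 => hC β hb1 (hb2.trans hγα)) hu
        (by show subtm q (seq.t γ) = some v; rw [heq, hv])
  · -- limit case
    obtain ⟨h1, h2⟩ := hconv hlim
    obtain ⟨βa, hβa, ha⟩ := h1 (q.length + 1)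
    obtain ⟨βb, hβb, hb⟩ := h2 (q.length + 1)
    set β₁ := max β₀ (max βa βb) with hβ₁def
    have hβ₁lt : β₁ < α := max_lt hβ₀lt (max_lt hβa hβb)
    have hβ₀β₁ : β₀ ≤ β₁ := le_max_left _ _
    have hag : Agree (q.length + 1) (seq.t β₁) (seq.t α) :=
      ha β₁ (le_trans (le_max_left _ _) (le_max_right _ _)) hβ₁lt
    obtain ⟨u₁, hu₁, hagv⟩ := agree_subtm q 1 (agree_symm _ hag) hv
    have hGuu₁ : Grel R u u₁ :=
      IHα β₁ hβ₁lt (seq.restrict β₁ hβ₁lt.le) (fun hl => seq.conv β₁ hβ₁lt hl) β₀ hβ₀β₁ q u u₁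
        (fun β hb1 hb2 => hC β hb1 (hb2.trans hβ₁lt)) hu hu₁
    rcases hagv with ⟨x, rfl, rfl⟩ | ⟨f, ts', ss', rfl, rfl, _⟩
    · exact hGuu₁
    · refine hGuu₁.trans (ReflTransGen.single (Or.inr (Or.inr (Or.inr
        ⟨f, ss', ts', rfl, rfl, fun i => EqvGen.rel _ _ ?_⟩))))
      refine ⟨n, α, seq, hconv, β₁, hβ₁lt.le, q ++ [(i : ℕ)], ?_, ?_, ?_⟩
      · intro β hb1 hb2
        by_cases hq : q <+: seq.pos β
        · obtain ⟨rest, hrest⟩ := hq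
          have hlen : q.length + 1 ≤ (seq.pos β).length :=
            hb β (le_trans (le_trans (le_max_right _ _) (le_max_right _ _)) hb1) hb2
          match rest, hrest with
          | [], hrest =>
            rw [← hrest] at hlen
            simp at hlen
          | j :: p₂, hrest =>
            by_cases hji : j = (i : ℕ)
            · subst hji
              exact Or.inl ⟨p₂, by rw [← hrest, List.append_assoc]; rfl⟩
            · refine Or.inr (fun hcon => ?_)
              have hle : (seq.pos β).length ≤ (q ++ [(i : ℕ)]).length := hcon.length_le
              rw [List.length_append, List.length_singleton] at hle
              have heq2 : seq.pos β = q ++ [(i : ℕ)] :=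
                hcon.eq_of_length (by
                  rw [List.length_append, List.length_singleton]; omega)
              rw [← hrest] at heq2
              have := List.append_cancel_left heq2
              simp at this
              exact hji this.1
        · have hq2 : ¬ seq.pos β <+: q := (hC β (le_trans hβ₀β₁ hb1) hb2).resolve_left hq
          refine Or.inr (fun hcon => ?_)
          rcases le_or_gt (seq.pos β).length q.length with hl | hl
          · exact hq2 (List.prefix_of_prefix_length_le hcon (List.prefix_append q _) hl)
          · have hle : (seq.pos β).length ≤ q.length + 1 := by
              have := hcon.length_le
              rwa [List.length_append, List.length_singleton] at this
            have heq2 : seq.pos β = q ++ [(i : ℕ)] :=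
              hcon.eq_of_length (by
                rw [List.length_append, List.length_singleton]
                omega)
            exact hq (heq2 ▸ List.prefix_append q _)
      · rw [subtm_append, hu₁]
        show subtm ((i : ℕ) :: []) (Tm.node f ss') = some (ss' i)
        rw [subtm_cons_node']
        rfl
      · rw [subtm_append, hv]
        show subtm ((i : ℕ) :: []) (Tm.node f ts') = some (ts' i)
        rw [subtm_cons_node']
        rfl


/-- For every TRS `R`, Kahrs's relation `S_E(→)` is included in the
infinitary equational reasoning relation: `S_E(→) ⊆ =∞`. -/
theorem SERel_subset_ieq (Sg : Signature) (X : Type) [Infinite X] (R : TRS Sg X) :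
    ∀ s t, SERel R s t → ieq R s t := by
  have hW0G : ∀ u v : Tm Sg X, W0 R u v → Grel R u v := by
    rintro u v ⟨n, α, seq, hconv, β₀, hβ₀, q, hC, hu, hv⟩
    exact lemA R n α seq hconv β₀ hβ₀ q u v hC hu hv
  have hWG : ∀ u v : Tm Sg X, Wrel R u v → Grel R u v := fun u v h => grel_of_eqvGen hW0G h
  have hpost : Grel R ≤ (ieqHom R) (Grel R) := by
    intro a b hab
    refine ReflTransGen.mono (fun x y hxy => ?_) _ _ hab
    rcases hxy with h | h | h
    · exact Or.inl h
    · exact Or.inr (Or.inl h)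
    · exact Or.inr (Or.inr (liftRel_mono (fun x' y' h' => hWG x' y' h') _ _ h))
  have hle : Grel R ≤ ieq R := OrderHom.le_gfp _ hpost
  rintro s t ⟨n, h⟩
  refine hle s t ?_
  cases n with
  | zero => exact step_grel R h
  | succ k =>
    obtain ⟨α, seq, h0, hend, hconv⟩ := h
    exact lemA R k α seq (by rw [hend]; exact hconv) 0 (zero_le : (0 : Ordinal.{0}) ≤ α) [] s t
      (fun β _ _ => Or.inl List.nil_prefix)
      (by rw [subtm_nil, h0]) (by rw [subtm_nil, hend])
end
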